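/- arXiv:1807.04124 — 3 statements merged into one kernel-verified Lean document; each statement's English description precedes it below -/
import Mathlib

section
/- Fix 1/2 < σ ≤ σ₀ < 1 and 0 < α ≤ 1. Then ∑_{1 ≤ m ≠ n ≤ T} (m+α)^{-σ}(n+α)^{-σ} |log((n+α)/(m+α))|^{-1} = O_{σ₀}(T^{2-2σ} log T). -/
open Finset

lemma aux_log {x y : ℝ} (hx : 0 < x) (hxy : x < y) :
    (y - x) / y ≤ Real.log y - Real.log x := by
  have hy : 0 < y := hx.trans hxy
  have h := Real.log_le_sub_one_of_pos (show 0 < x / y by positivity)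
  rw [Real.log_div hx.ne' hy.ne'] at h
  have h2 : (y - x) / y = 1 - x / y := by field_simp
  have h3 : x / y ≤ 1 := by rw [div_le_one hy]; exact hxy.le
  linarith

lemma aux_key {σ T x y : ℝ} (hσ1 : σ ≤ 1) (hx : 0 < x) (hxy : x < y) (hy2T : y ≤ 2 * T) :
    x ^ (-σ) * y ^ (-σ) * |Real.log y - Real.log x|⁻¹ ≤
      (x ^ (-σ) + y ^ (-σ)) * (2 * T) ^ (1 - σ) * (y - x)⁻¹ := by
  have hy : 0 < y := hx.trans hxy
  have hyx : 0 < y - x := by linarith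
  have hlog : (y - x) / y ≤ Real.log y - Real.log x := aux_log hx hxy
  have hlogpos : 0 < Real.log y - Real.log x := lt_of_lt_of_le (by positivity) hlog
  rw [abs_of_pos hlogpos]
  have hinv : (Real.log y - Real.log x)⁻¹ ≤ y / (y - x) := by
    calc (Real.log y - Real.log x)⁻¹ ≤ ((y - x) / y)⁻¹ := inv_anti₀ (by positivity) hlog
      _ = y / (y - x) := by rw [inv_div]
  have h1 : x ^ (-σ) * y ^ (-σ) * (Real.log y - Real.log x)⁻¹
      ≤ x ^ (-σ) * y ^ (-σ) * (y / (y - x)) :=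
    mul_le_mul_of_nonneg_left hinv (by positivity)
  have h2 : x ^ (-σ) * y ^ (-σ) * (y / (y - x)) = x ^ (-σ) * (y ^ (-σ) * y) * (y - x)⁻¹ := by
    ring
  have h3 : y ^ (-σ) * y = y ^ (1 - σ) := by
    rw [show (1 - σ) = -σ + 1 by ring, Real.rpow_add hy, Real.rpow_one]
  calc x ^ (-σ) * y ^ (-σ) * (Real.log y - Real.log x)⁻¹
      ≤ x ^ (-σ) * (y ^ (-σ) * y) * (y - x)⁻¹ := by rw [← h2]; exact h1
    _ = x ^ (-σ) * y ^ (1 - σ) * (y - x)⁻¹ := by rw [h3]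
    _ ≤ (x ^ (-σ) + y ^ (-σ)) * (2 * T) ^ (1 - σ) * (y - x)⁻¹ := by
        apply mul_le_mul_of_nonneg_right _ (inv_nonneg.mpr hyx.le)
        apply mul_le_mul (le_add_of_nonneg_right (by positivity))
          (Real.rpow_le_rpow hy.le hy2T (by linarith)) (by positivity)
        positivity

lemma aux_harmonic : ∀ N : ℕ, 1 ≤ N → ∑ k ∈ Finset.Icc 1 N, (1 : ℝ) / k ≤ 1 + Real.log N := by
  intro N
  induction N with
  | zero => intro h; omega
  | succ n ih =>
    intro _
    rcases Nat.lt_or_ge n 1 with h | hn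
    · have : n = 0 := by omega
      subst this; simp
    · rw [Finset.sum_Icc_succ_top (by omega : 1 ≤ n + 1)]
      have hlog : (1 : ℝ) / (n + 1) ≤ Real.log (n + 1) - Real.log n := by
        have := aux_log (show (0:ℝ) < n by exact_mod_cast hn) (by linarith : (n:ℝ) < n + 1)
        simpa using this
      have := ih hn
      push_cast
      push_cast at this hlog
      linarith

lemma aux_rpow_step {σ : ℝ} (hσ0 : 0 < σ) (hσ1 : σ < 1) {N : ℕ} (hN : 1 ≤ N) :
    ((N : ℝ) + 1) ^ (-σ) ≤ (((N : ℝ) + 1) ^ (1 - σ) - (N : ℝ) ^ (1 - σ)) / (1 - σ) := by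
  have hN0 : (0 : ℝ) < N := by exact_mod_cast hN
  have hint : (∫ x in (N : ℝ)..((N : ℝ) + 1), x ^ (-σ)) =
      (((N : ℝ) + 1) ^ (-σ + 1) - (N : ℝ) ^ (-σ + 1)) / (-σ + 1) :=
    integral_rpow (Or.inl (by linarith))
  have hmono : ((N : ℝ) + 1) ^ (-σ) ≤ ∫ x in (N : ℝ)..((N : ℝ) + 1), x ^ (-σ) := by
    have hconst : (∫ _ in (N : ℝ)..((N : ℝ) + 1), ((N : ℝ) + 1) ^ (-σ)) =
        ((N : ℝ) + 1) ^ (-σ) := by simp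
    rw [← hconst]
    apply intervalIntegral.integral_mono_on (by linarith) intervalIntegrable_const
      (intervalIntegral.intervalIntegrable_rpow' (by linarith))
    intro x hx
    exact Real.rpow_le_rpow_of_nonpos (by linarith [hx.1]) (by linarith [hx.2]) (by linarith)
  rw [hint, show (-σ + 1) = 1 - σ by ring] at hmono
  exact hmono

lemma aux_rpow_sum {σ : ℝ} (hσ0 : 0 < σ) (hσ1 : σ < 1) :
    ∀ N : ℕ, 1 ≤ N → ∑ m ∈ Finset.Icc 1 N, (m : ℝ) ^ (-σ) ≤ (N : ℝ) ^ (1 - σ) / (1 - σ) := by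
  have h1σ : (0:ℝ) < 1 - σ := by linarith
  intro N
  induction N with
  | zero => intro h; omega
  | succ n ih =>
    intro _
    rcases Nat.lt_or_ge n 1 with h | hn
    · have : n = 0 := by omega
      subst this
      simp only [Nat.cast_one, Finset.Icc_self, Finset.sum_singleton, Nat.cast_one,
        Real.one_rpow, Nat.cast_ofNat, Nat.zero_add, Nat.cast_succ]
      norm_num
      calc (1:ℝ) = (1:ℝ)⁻¹ := by norm_num
        _ ≤ (1 - σ)⁻¹ := inv_anti₀ h1σ (by linarith)
    · rw [Finset.sum_Icc_succ_top (by omega : 1 ≤ n + 1)]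
      have hstep := aux_rpow_step hσ0 hσ1 hn
      have := ih hn
      push_cast
      push_cast at this hstep
      calc (∑ m ∈ Finset.Icc 1 n, (m : ℝ) ^ (-σ)) + ((n : ℝ) + 1) ^ (-σ)
          ≤ (n : ℝ) ^ (1 - σ) / (1 - σ) +
            (((n : ℝ) + 1) ^ (1 - σ) - (n : ℝ) ^ (1 - σ)) / (1 - σ) := add_le_add this hstep
        _ = ((n : ℝ) + 1) ^ (1 - σ) / (1 - σ) := by ring

lemma aux_wsum {N m : ℕ} (hm1 : 1 ≤ m) (hmN : m ≤ N) :
    ∑ n ∈ Finset.Icc 1 N, (if m = n then (0:ℝ) else |(m:ℝ) - (n:ℝ)|⁻¹) ≤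
      2 * ∑ k ∈ Finset.Icc 1 N, (1:ℝ) / k := by
  have hmem : m ∈ Finset.Icc 1 N := Finset.mem_Icc.mpr ⟨hm1, hmN⟩
  have hsplit : ∑ n ∈ Finset.Icc 1 N, (if m = n then (0:ℝ) else |(m:ℝ) - (n:ℝ)|⁻¹)
      = ∑ n ∈ (Finset.Icc 1 N).filter (fun n => n < m), |(m:ℝ) - (n:ℝ)|⁻¹
        + ∑ n ∈ (Finset.Icc 1 N).filter (fun n => m < n), |(m:ℝ) - (n:ℝ)|⁻¹ := by
    rw [← Finset.sum_filter_add_sum_filter_not (Finset.Icc 1 N) (fun n => n < m)]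
    congr 1
    · rw [Finset.sum_congr rfl]
      intro n hn
      rw [Finset.mem_filter] at hn
      rw [if_neg (by omega)]
    · rw [show (Finset.Icc 1 N).filter (fun n => ¬ n < m)
          = insert m ((Finset.Icc 1 N).filter (fun n => m < n)) from by
        ext k; simp only [Finset.mem_filter, Finset.mem_insert, Finset.mem_Icc]; omega]
      rw [Finset.sum_insert (by simp)]
      rw [if_pos rfl, zero_add]
      apply Finset.sum_congr rfl
      intro n hn
      rw [Finset.mem_filter] at hn
      rw [if_neg (by omega)]
  rw [hsplit]
  have h1 : ∑ n ∈ (Finset.Icc 1 N).filter (fun n => n < m), |(m:ℝ) - (n:ℝ)|⁻¹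
      ≤ ∑ k ∈ Finset.Icc 1 N, (1:ℝ) / k := by
    calc ∑ n ∈ (Finset.Icc 1 N).filter (fun n => n < m), |(m:ℝ) - (n:ℝ)|⁻¹
        = ∑ n ∈ (Finset.Icc 1 N).filter (fun n => n < m), (1:ℝ) / ((m - n : ℕ) : ℝ) := by
          apply Finset.sum_congr rfl
          intro n hn
          rw [Finset.mem_filter] at hn
          have h2 : (n:ℝ) < m := by exact_mod_cast hn.2
          rw [abs_of_pos (by linarith), Nat.cast_sub hn.2.le, one_div]
      _ = ∑ k ∈ ((Finset.Icc 1 N).filter (fun n => n < m)).image (fun n => m - n),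
            (1:ℝ) / (k : ℝ) := by
          rw [Finset.sum_image]
          intro x hx y hy hxy
          rw [Finset.mem_coe, Finset.mem_filter] at hx hy
          simp only at hxy
          omega
      _ ≤ ∑ k ∈ Finset.Icc 1 N, (1:ℝ) / k := by
          apply Finset.sum_le_sum_of_subset_of_nonneg
          · intro k hk
            simp only [Finset.mem_image, Finset.mem_filter, Finset.mem_Icc] at hk ⊢
            omega
          · intro k _ _; positivity
  have h2 : ∑ n ∈ (Finset.Icc 1 N).filter (fun n => m < n), |(m:ℝ) - (n:ℝ)|⁻¹
      ≤ ∑ k ∈ Finset.Icc 1 N, (1:ℝ) / k := by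
    calc ∑ n ∈ (Finset.Icc 1 N).filter (fun n => m < n), |(m:ℝ) - (n:ℝ)|⁻¹
        = ∑ n ∈ (Finset.Icc 1 N).filter (fun n => m < n), (1:ℝ) / ((n - m : ℕ) : ℝ) := by
          apply Finset.sum_congr rfl
          intro n hn
          rw [Finset.mem_filter] at hn
          have h2 : (m:ℝ) < n := by exact_mod_cast hn.2
          rw [abs_sub_comm, abs_of_pos (by linarith), Nat.cast_sub hn.2.le, one_div]
      _ = ∑ k ∈ ((Finset.Icc 1 N).filter (fun n => m < n)).image (fun n => n - m),
            (1:ℝ) / (k : ℝ) := by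
          rw [Finset.sum_image]
          intro x hx y hy hxy
          rw [Finset.mem_coe, Finset.mem_filter] at hx hy
          simp only at hxy
          omega
      _ ≤ ∑ k ∈ Finset.Icc 1 N, (1:ℝ) / k := by
          apply Finset.sum_le_sum_of_subset_of_nonneg
          · intro k hk
            simp only [Finset.mem_image, Finset.mem_filter, Finset.mem_Icc] at hk ⊢
            omega
          · intro k _ _; positivity
  linarith

theorem offdiag_sum_with_log_bigO (σ₀ : ℝ) (hσ₀ : σ₀ < 1) :
    ∃ C : ℝ, 0 < C ∧ ∀ σ : ℝ, 1 / 2 < σ → σ ≤ σ₀ → ∀ α : ℝ, 0 < α → α ≤ 1 →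
      ∀ T : ℝ, 2 ≤ T →
        (∑ m ∈ Finset.Icc 1 ⌊T⌋₊, ∑ n ∈ Finset.Icc 1 ⌊T⌋₊,
            if m ≠ n then
              (m + α) ^ (-σ) * (n + α) ^ (-σ) * |Real.log ((n + α) / (m + α))|⁻¹
            else 0)
          ≤ C * T ^ (2 - 2 * σ) * Real.log T := by
  have hlog2 : (0:ℝ) < Real.log 2 := Real.log_pos one_lt_two
  refine ⟨8 * (1 + 1 / Real.log 2) * (1 / (1 - σ₀)), ?_, ?_⟩
  · have h1 : (0:ℝ) < 1 - σ₀ := by linarith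
    positivity
  intro σ hσhalf hσσ₀ α hα0 hα1 T hT
  set N := ⌊T⌋₊ with hNdef
  have hT0 : (0:ℝ) < T := by linarith
  have hσ1 : σ < 1 := lt_of_le_of_lt hσσ₀ hσ₀
  have hσ0 : (0:ℝ) < σ := by linarith
  have h1σ : (0:ℝ) < 1 - σ := by linarith
  have h1σ₀ : (0:ℝ) < 1 - σ₀ := by linarith
  have hN1 : 1 ≤ N := Nat.le_floor (by exact_mod_cast (by linarith : (1:ℝ) ≤ T))
  have hNT : (N:ℝ) ≤ T := Nat.floor_le hT0.le
  have h2T : ∀ n ∈ Finset.Icc 1 N, (n:ℝ) + α ≤ 2 * T := by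
    intro n hn
    rw [Finset.mem_Icc] at hn
    have : (n:ℝ) ≤ N := by exact_mod_cast hn.2
    linarith
  have hlogT2 : Real.log 2 ≤ Real.log T := Real.log_le_log two_pos hT
  have hlogT : (0:ℝ) < Real.log T := lt_of_lt_of_le hlog2 hlogT2
  -- Step 1: termwise bound
  have step1 : (∑ m ∈ Finset.Icc 1 N, ∑ n ∈ Finset.Icc 1 N,
        if m ≠ n then
          ((m:ℝ) + α) ^ (-σ) * ((n:ℝ) + α) ^ (-σ) * |Real.log (((n:ℝ) + α) / ((m:ℝ) + α))|⁻¹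
        else 0)
      ≤ ∑ m ∈ Finset.Icc 1 N, ∑ n ∈ Finset.Icc 1 N,
          (((m:ℝ) + α) ^ (-σ) + ((n:ℝ) + α) ^ (-σ)) * (2*T) ^ (1-σ) *
            (if m = n then (0:ℝ) else |(m:ℝ) - (n:ℝ)|⁻¹) := by
    apply Finset.sum_le_sum
    intro m hm
    apply Finset.sum_le_sum
    intro n hn
    by_cases h : m = n
    · subst h; simp
    · rw [if_pos h, if_neg h]
      rcases lt_or_gt_of_ne h with hlt | hlt
      · -- m < n
        have hmn : (m:ℝ) < n := by exact_mod_cast hlt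
        have hx : (0:ℝ) < (m:ℝ) + α := by
          have : (1:ℝ) ≤ m := by exact_mod_cast (Finset.mem_Icc.mp hm).1
          linarith
        have hxy : (m:ℝ) + α < (n:ℝ) + α := by linarith
        have hkey := aux_key hσ1.le hx hxy (h2T n hn)
        have hlogeq : Real.log (((n:ℝ) + α) / ((m:ℝ) + α))
            = Real.log ((n:ℝ) + α) - Real.log ((m:ℝ) + α) :=
          Real.log_div (show ((n:ℝ)+α) ≠ 0 by positivity) (ne_of_gt hx)
        have habs : |(m:ℝ) - (n:ℝ)| = ((n:ℝ) + α) - ((m:ℝ) + α) := by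
          rw [abs_sub_comm, abs_of_pos (by linarith)]; ring
        rw [hlogeq, habs]
        exact hkey
      · -- n < m
        have hmn : (n:ℝ) < m := by exact_mod_cast hlt
        have hx : (0:ℝ) < (n:ℝ) + α := by
          have : (1:ℝ) ≤ n := by exact_mod_cast (Finset.mem_Icc.mp hn).1
          linarith
        have hxy : (n:ℝ) + α < (m:ℝ) + α := by linarith
        have hkey := aux_key hσ1.le hx hxy (h2T m hm)
        have hlogeq : Real.log (((n:ℝ) + α) / ((m:ℝ) + α))
            = Real.log ((n:ℝ) + α) - Real.log ((m:ℝ) + α) :=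
          Real.log_div (ne_of_gt hx) (show ((m:ℝ)+α) ≠ 0 by
            have : (1:ℝ) ≤ m := by exact_mod_cast (Finset.mem_Icc.mp hm).1
            positivity)
        have habs2 : |Real.log ((n:ℝ) + α) - Real.log ((m:ℝ) + α)|
            = |Real.log ((m:ℝ) + α) - Real.log ((n:ℝ) + α)| := abs_sub_comm _ _
        have habs : |(m:ℝ) - (n:ℝ)| = ((m:ℝ) + α) - ((n:ℝ) + α) := by
          rw [abs_of_pos (by linarith)]; ring
        rw [hlogeq, habs2, habs]
        calc ((m:ℝ) + α) ^ (-σ) * ((n:ℝ) + α) ^ (-σ) *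
              |Real.log ((m:ℝ) + α) - Real.log ((n:ℝ) + α)|⁻¹
            = ((n:ℝ) + α) ^ (-σ) * ((m:ℝ) + α) ^ (-σ) *
              |Real.log ((m:ℝ) + α) - Real.log ((n:ℝ) + α)|⁻¹ := by ring
          _ ≤ (((n:ℝ) + α) ^ (-σ) + ((m:ℝ) + α) ^ (-σ)) * (2*T) ^ (1-σ) *
              (((m:ℝ) + α) - ((n:ℝ) + α))⁻¹ := hkey
          _ = (((m:ℝ) + α) ^ (-σ) + ((n:ℝ) + α) ^ (-σ)) * (2*T) ^ (1-σ) *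
              (((m:ℝ) + α) - ((n:ℝ) + α))⁻¹ := by ring
  -- Step 2: rearrange and bound
  have hS : ∑ m ∈ Finset.Icc 1 N, ((m:ℝ) + α) ^ (-σ) ≤ T ^ (1-σ) / (1 - σ₀) := by
    calc ∑ m ∈ Finset.Icc 1 N, ((m:ℝ) + α) ^ (-σ)
        ≤ ∑ m ∈ Finset.Icc 1 N, (m:ℝ) ^ (-σ) := by
          apply Finset.sum_le_sum
          intro m hm
          have h1 : (1:ℝ) ≤ m := by exact_mod_cast (Finset.mem_Icc.mp hm).1
          exact Real.rpow_le_rpow_of_nonpos (by linarith) (by linarith) (by linarith)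
      _ ≤ (N:ℝ) ^ (1-σ) / (1-σ) := aux_rpow_sum hσ0 hσ1 N hN1
      _ ≤ T ^ (1-σ) / (1-σ) :=
          div_le_div_of_nonneg_right (Real.rpow_le_rpow (Nat.cast_nonneg N) hNT h1σ.le) h1σ.le
      _ ≤ T ^ (1-σ) / (1-σ₀) := by
          apply div_le_div_of_nonneg_left (by positivity) h1σ₀ (by linarith)
  have hH : ∑ k ∈ Finset.Icc 1 N, (1:ℝ) / k ≤ (1 + 1 / Real.log 2) * Real.log T := by
    have h1 : ∑ k ∈ Finset.Icc 1 N, (1:ℝ) / k ≤ 1 + Real.log N := aux_harmonic N hN1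
    have h2 : Real.log N ≤ Real.log T :=
      Real.log_le_log (by exact_mod_cast hN1) hNT
    have hd0 : (0:ℝ) ≤ 1 / Real.log 2 := by positivity
    have hd : (1 / Real.log 2) * Real.log 2 = 1 := by field_simp
    have h5 : (0:ℝ) ≤ (1 / Real.log 2) * Real.log T - 1 := by
      have h6 := mul_nonneg hd0 (sub_nonneg.mpr hlogT2)
      rw [mul_sub, hd] at h6
      linarith
    nlinarith
  have hB : (2*T) ^ (1-σ) ≤ 2 * T ^ (1-σ) := by
    rw [Real.mul_rpow (by norm_num) hT0.le]
    apply mul_le_mul_of_nonneg_right _ (by positivity)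
    calc (2:ℝ) ^ (1-σ) ≤ (2:ℝ) ^ (1:ℝ) :=
          Real.rpow_le_rpow_of_exponent_le one_le_two (by linarith)
      _ = 2 := Real.rpow_one 2
  have hBpos : (0:ℝ) < (2*T) ^ (1-σ) := Real.rpow_pos_of_pos (by linarith) _
  have hHpos : (0:ℝ) ≤ ∑ k ∈ Finset.Icc 1 N, (1:ℝ) / k := by positivity
  calc (∑ m ∈ Finset.Icc 1 N, ∑ n ∈ Finset.Icc 1 N,
        if m ≠ n then
          ((m:ℝ) + α) ^ (-σ) * ((n:ℝ) + α) ^ (-σ) * |Real.log (((n:ℝ) + α) / ((m:ℝ) + α))|⁻¹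
        else 0)
      ≤ ∑ m ∈ Finset.Icc 1 N, ∑ n ∈ Finset.Icc 1 N,
          (((m:ℝ) + α) ^ (-σ) + ((n:ℝ) + α) ^ (-σ)) * (2*T) ^ (1-σ) *
            (if m = n then (0:ℝ) else |(m:ℝ) - (n:ℝ)|⁻¹) := step1
    _ = (∑ m ∈ Finset.Icc 1 N, ∑ n ∈ Finset.Icc 1 N,
          ((m:ℝ) + α) ^ (-σ) * (2*T) ^ (1-σ) * (if m = n then (0:ℝ) else |(m:ℝ) - (n:ℝ)|⁻¹))
        + (∑ m ∈ Finset.Icc 1 N, ∑ n ∈ Finset.Icc 1 N,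
          ((n:ℝ) + α) ^ (-σ) * (2*T) ^ (1-σ) * (if m = n then (0:ℝ) else |(m:ℝ) - (n:ℝ)|⁻¹)) := by
        rw [← Finset.sum_add_distrib]
        apply Finset.sum_congr rfl
        intro m _
        rw [← Finset.sum_add_distrib]
        apply Finset.sum_congr rfl
        intro n _
        ring
    _ = 2 * ∑ m ∈ Finset.Icc 1 N, ∑ n ∈ Finset.Icc 1 N,
          ((m:ℝ) + α) ^ (-σ) * (2*T) ^ (1-σ) * (if m = n then (0:ℝ) else |(m:ℝ) - (n:ℝ)|⁻¹) := by
        have hsymm : (∑ m ∈ Finset.Icc 1 N, ∑ n ∈ Finset.Icc 1 N,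
            ((n:ℝ) + α) ^ (-σ) * (2*T) ^ (1-σ) * (if m = n then (0:ℝ) else |(m:ℝ) - (n:ℝ)|⁻¹))
            = ∑ m ∈ Finset.Icc 1 N, ∑ n ∈ Finset.Icc 1 N,
            ((m:ℝ) + α) ^ (-σ) * (2*T) ^ (1-σ) * (if m = n then (0:ℝ) else |(m:ℝ) - (n:ℝ)|⁻¹) := by
          rw [Finset.sum_comm]
          apply Finset.sum_congr rfl
          intro m _
          apply Finset.sum_congr rfl
          intro n _
          congr 1
          by_cases h : m = n
          · subst h; simp
          · rw [if_neg h, if_neg (fun hh => h hh.symm), abs_sub_comm]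
        rw [hsymm]
        ring
    _ ≤ 2 * ∑ m ∈ Finset.Icc 1 N,
          ((m:ℝ) + α) ^ (-σ) * (2*T) ^ (1-σ) * (2 * ∑ k ∈ Finset.Icc 1 N, (1:ℝ) / k) := by
        apply mul_le_mul_of_nonneg_left _ (by norm_num)
        apply Finset.sum_le_sum
        intro m hm
        rw [← Finset.mul_sum]
        apply mul_le_mul_of_nonneg_left _ (by positivity)
        exact aux_wsum (Finset.mem_Icc.mp hm).1 (Finset.mem_Icc.mp hm).2
    _ = (∑ m ∈ Finset.Icc 1 N, ((m:ℝ) + α) ^ (-σ)) *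
          (4 * ((2*T) ^ (1-σ) * ∑ k ∈ Finset.Icc 1 N, (1:ℝ) / k)) := by
        simp only [mul_assoc]
        rw [← Finset.sum_mul]
        ring
    _ ≤ (T ^ (1-σ) / (1 - σ₀)) *
          (4 * ((2 * T ^ (1-σ)) * ((1 + 1 / Real.log 2) * Real.log T))) := by
        apply mul_le_mul hS _ (by positivity) (by positivity)
        apply mul_le_mul_of_nonneg_left _ (by norm_num)
        apply mul_le_mul hB hH hHpos (by positivity)
    _ = 8 * (1 + 1 / Real.log 2) * (1 / (1 - σ₀)) * T ^ (2 - 2*σ) * Real.log T := by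
        rw [show (2 - 2*σ : ℝ) = (1-σ) + (1-σ) by ring, Real.rpow_add hT0]
        ring
end

section
/- For 1 < n ≤ T (integers) one has ∑_{1 < n ≤ T} ∑_{n/2 ≤ m < n} (1/(m^σ n^σ)) · n/(n−m) ≪_{σ₀} T^{2−2σ} log T, uniformly for 1/2 < σ ≤ σ₀ < 1. -/
/-- Integral comparison: `∑_{n=2}^N n^α ≤ N^{α+1}/(α+1)` for `-1 < α < 0`. -/
lemma sum_rpow_aux (α : ℝ) (hα : -1 < α) (hα0 : α < 0) (N : ℕ) (hN : 2 ≤ N) :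
    ∑ n ∈ Finset.Icc 2 N, (n : ℝ) ^ α ≤ (N : ℝ) ^ (α + 1) / (α + 1) := by
  have hα1 : 0 < α + 1 := by linarith
  have hanti : AntitoneOn (fun x : ℝ => x ^ α) (Set.Icc 1 (1 + (N - 1 : ℕ))) := by
    intro x hx y hy hxy
    exact Real.rpow_le_rpow_of_nonpos (lt_of_lt_of_le one_pos hx.1) hxy hα0.le
  have hsum := hanti.sum_le_integral
  have hcast : ((1 : ℝ) + (N - 1 : ℕ)) = (N : ℝ) := by
    have : (1 : ℕ) ≤ N := by omega
    push_cast [Nat.cast_sub this]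
    ring
  have hint : ∫ x in (1 : ℝ)..(1 + (N - 1 : ℕ)), x ^ α
      = ((N : ℝ) ^ (α + 1) - 1 ^ (α + 1)) / (α + 1) := by
    rw [integral_rpow (Or.inl hα), hcast]
  have hsum' : ∑ i ∈ Finset.range (N - 1), ((1 : ℝ) + ((i + 1 : ℕ) : ℝ)) ^ α
      ≤ ((N : ℝ) ^ (α + 1) - 1 ^ (α + 1)) / (α + 1) := by
    rw [← hint]; exact hsum
  have heq : ∑ n ∈ Finset.Icc 2 N, (n : ℝ) ^ α
      = ∑ i ∈ Finset.range (N - 1), ((1 : ℝ) + ((i + 1 : ℕ) : ℝ)) ^ α := by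
    rw [show Finset.Icc 2 N = Finset.Ico 2 (N + 1) by rfl, Finset.sum_Ico_eq_sum_range]
    have : N + 1 - 2 = N - 1 := by omega
    rw [this]
    refine Finset.sum_congr rfl fun i _ => ?_
    congr 1
    push_cast
    ring
  rw [heq]
  refine hsum'.trans ?_
  have h1 : (1 : ℝ) ^ (α + 1) = 1 := Real.one_rpow _
  rw [h1]
  have : (N : ℝ) ^ (α + 1) - 1 ≤ (N : ℝ) ^ (α + 1) := by linarith
  exact div_le_div_of_nonneg_right this hα1.le |>.trans_eq rfl

/-- Termwise bound on the inner sum. -/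
lemma inner_sum_aux (σ : ℝ) (hσ : 1 / 2 < σ) (hσ1 : σ < 1) (n : ℕ) (hn : 2 ≤ n) :
    (∑ m ∈ Finset.Ico 1 n,
        if (n : ℝ) / 2 ≤ (m : ℝ) then
          (1 / ((m : ℝ) ^ σ * (n : ℝ) ^ σ)) * ((n : ℝ) / ((n : ℝ) - (m : ℝ)))
        else 0)
      ≤ 2 * (n : ℝ) ^ (1 - 2 * σ) * ∑ k ∈ Finset.Ico 1 n, ((k : ℝ))⁻¹ := by
  have hn0 : (0 : ℝ) < n := by positivity
  have step1 : (∑ m ∈ Finset.Ico 1 n,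
        if (n : ℝ) / 2 ≤ (m : ℝ) then
          (1 / ((m : ℝ) ^ σ * (n : ℝ) ^ σ)) * ((n : ℝ) / ((n : ℝ) - (m : ℝ)))
        else 0)
      ≤ ∑ m ∈ Finset.Ico 1 n, 2 * (n : ℝ) ^ (1 - 2 * σ) * ((n : ℝ) - (m : ℝ))⁻¹ := by
    refine Finset.sum_le_sum fun m hm => ?_
    obtain ⟨hm1, hmn⟩ := Finset.mem_Ico.mp hm
    have hmr : (1 : ℝ) ≤ m := by exact_mod_cast hm1
    have hmnr : (m : ℝ) < n := by exact_mod_cast hmn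
    have hdiff : (0 : ℝ) < (n : ℝ) - m := by linarith
    split_ifs with h
    · -- m ≥ n/2
      have hm0 : (0 : ℝ) < m := by linarith
      have hns : (0 : ℝ) < (n : ℝ) ^ σ := Real.rpow_pos_of_pos hn0 σ
      have hms : (0 : ℝ) < (m : ℝ) ^ σ := Real.rpow_pos_of_pos hm0 σ
      -- n^σ / 2 ≤ m^σ
      have h2σ : (2 : ℝ) ^ σ ≤ 2 := by
        calc (2 : ℝ) ^ σ ≤ (2 : ℝ) ^ (1 : ℝ) :=
              Real.rpow_le_rpow_of_exponent_le one_le_two hσ1.le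
          _ = 2 := Real.rpow_one 2
      have hhalf : (n : ℝ) ^ σ / 2 ≤ (m : ℝ) ^ σ := by
        have h1 : ((n : ℝ) / 2) ^ σ ≤ (m : ℝ) ^ σ :=
          Real.rpow_le_rpow (by positivity) h (by linarith)
        have h2 : ((n : ℝ) / 2) ^ σ = (n : ℝ) ^ σ / (2 : ℝ) ^ σ :=
          Real.div_rpow hn0.le (by norm_num : (0:ℝ) ≤ 2) σ
        have h3 : (n : ℝ) ^ σ / 2 ≤ (n : ℝ) ^ σ / (2 : ℝ) ^ σ := by
          apply div_le_div_of_nonneg_left hns.le (by positivity) h2σ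
        linarith [h2 ▸ h1]
      have key : 1 / ((m : ℝ) ^ σ * (n : ℝ) ^ σ) ≤ 2 / ((n : ℝ) ^ σ * (n : ℝ) ^ σ) := by
        rw [div_le_div_iff₀ (by positivity) (by positivity)]
        nlinarith
      calc (1 / ((m : ℝ) ^ σ * (n : ℝ) ^ σ)) * ((n : ℝ) / ((n : ℝ) - (m : ℝ)))
          ≤ (2 / ((n : ℝ) ^ σ * (n : ℝ) ^ σ)) * ((n : ℝ) / ((n : ℝ) - (m : ℝ))) :=
            mul_le_mul_of_nonneg_right key (by positivity)
        _ = 2 * (n : ℝ) ^ (1 - 2 * σ) * ((n : ℝ) - (m : ℝ))⁻¹ := by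
            have h1 : (n : ℝ) ^ σ * (n : ℝ) ^ σ = (n : ℝ) ^ (2 * σ) := by
              rw [← Real.rpow_add hn0]; ring_nf
            have h2 : (n : ℝ) ^ (1 - 2 * σ) = (n : ℝ) / (n : ℝ) ^ (2 * σ) := by
              rw [Real.rpow_sub hn0, Real.rpow_one]
            rw [h1, h2]
            have hne : ((n : ℝ) ^ (2 * σ)) ≠ 0 := (Real.rpow_pos_of_pos hn0 _).ne'
            field_simp
    · positivity
  refine step1.trans ?_
  rw [Finset.mul_sum]
  apply le_of_eq
  refine Finset.sum_nbij' (fun m => n - m) (fun k => n - k) ?_ ?_ ?_ ?_ ?_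
  · intro m hm
    simp only [Finset.mem_Ico] at hm ⊢
    omega
  · intro k hk
    simp only [Finset.mem_Ico] at hk ⊢
    omega
  · intro m hm
    simp only [Finset.mem_Ico] at hm
    omega
  · intro k hk
    simp only [Finset.mem_Ico] at hk
    omega
  · intro m hm
    obtain ⟨h1, h2⟩ := Finset.mem_Ico.mp hm
    congr 1
    congr 1
    push_cast [Nat.cast_sub (le_of_lt h2)]
    ring

theorem near_diagonal_sum_bigO (σ₀ : ℝ) (hσ₀ : σ₀ < 1) :
    ∃ C : ℝ, 0 < C ∧ ∀ σ : ℝ, 1 / 2 < σ → σ ≤ σ₀ → ∀ T : ℝ, 2 ≤ T →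
      (∑ n ∈ Finset.Icc 2 ⌊T⌋₊, ∑ m ∈ Finset.Ico 1 n,
          if (n : ℝ) / 2 ≤ (m : ℝ) then
            (1 / ((m : ℝ) ^ σ * (n : ℝ) ^ σ)) * ((n : ℝ) / ((n : ℝ) - (m : ℝ)))
          else 0)
        ≤ C * T ^ (2 - 2 * σ) * Real.log T := by
  have hσ₀' : (0:ℝ) < 1 - σ₀ := by linarith
  refine ⟨3 / (1 - σ₀), by positivity, ?_⟩
  intro σ hσ hσσ₀ T hT
  set N := ⌊T⌋₊ with hNdef
  have hσ1 : σ < 1 := lt_of_le_of_lt hσσ₀ hσ₀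
  have hT0 : (0 : ℝ) < T := by linarith
  have hN2 : 2 ≤ N := Nat.le_floor (by exact_mod_cast hT)
  have hNT : (N : ℝ) ≤ T := Nat.floor_le hT0.le
  have hlogT : 1 / 2 < Real.log T := by
    have := Real.log_le_log (by norm_num : (0:ℝ) < 2) hT
    have h2 := Real.log_two_gt_d9
    linarith
  have hexp : (0 : ℝ) < 2 - 2 * σ := by linarith
  have hexp₀ : (0 : ℝ) < 2 - 2 * σ₀ := by linarith
  -- Step 1: bound each inner sum
  have step1 : (∑ n ∈ Finset.Icc 2 N, ∑ m ∈ Finset.Ico 1 n,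
        if (n : ℝ) / 2 ≤ (m : ℝ) then
          (1 / ((m : ℝ) ^ σ * (n : ℝ) ^ σ)) * ((n : ℝ) / ((n : ℝ) - (m : ℝ)))
        else 0)
      ≤ ∑ n ∈ Finset.Icc 2 N, 2 * (n : ℝ) ^ (1 - 2 * σ) * (1 + Real.log T) := by
    refine Finset.sum_le_sum fun n hn => ?_
    obtain ⟨hn2, hnN⟩ := Finset.mem_Icc.mp hn
    refine (inner_sum_aux σ hσ hσ1 n hn2).trans ?_
    have hrp : (0 : ℝ) ≤ 2 * (n : ℝ) ^ (1 - 2 * σ) := by positivity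
    refine mul_le_mul_of_nonneg_left ?_ hrp
    -- harmonic bound
    have hIco : Finset.Ico 1 n = Finset.Icc 1 (n - 1) := by
      rw [← Finset.Ico_add_one_right_eq_Icc]
      congr 1
      omega
    have h1 : ∑ k ∈ Finset.Ico 1 n, ((k : ℝ))⁻¹ = (harmonic (n - 1) : ℝ) := by
      rw [hIco, harmonic_eq_sum_Icc]
      push_cast
      rfl
    rw [h1]
    refine (harmonic_le_one_add_log (n - 1)).trans ?_
    have hcast : (1 : ℝ) ≤ ((n - 1 : ℕ) : ℝ) := by
      have : 1 ≤ n - 1 := by omega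
      exact_mod_cast this
    have hle : ((n - 1 : ℕ) : ℝ) ≤ T := by
      have h2 : ((n - 1 : ℕ) : ℝ) ≤ (n : ℝ) := by
        exact_mod_cast Nat.sub_le n 1
      have h3 : (n : ℝ) ≤ (N : ℝ) := by exact_mod_cast hnN
      linarith
    have := Real.log_le_log (by linarith : (0:ℝ) < ((n - 1 : ℕ) : ℝ)) hle
    linarith
  -- Step 2: sum the powers
  have step2 : ∑ n ∈ Finset.Icc 2 N, 2 * (n : ℝ) ^ (1 - 2 * σ) * (1 + Real.log T)
      = 2 * (1 + Real.log T) * ∑ n ∈ Finset.Icc 2 N, (n : ℝ) ^ (1 - 2 * σ) := by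
    rw [Finset.mul_sum]
    refine Finset.sum_congr rfl fun n _ => by ring
  have step3 : ∑ n ∈ Finset.Icc 2 N, (n : ℝ) ^ (1 - 2 * σ)
      ≤ (N : ℝ) ^ (2 - 2 * σ) / (2 - 2 * σ) := by
    have h := sum_rpow_aux (1 - 2 * σ) (by linarith) (by linarith) N hN2
    have : (1 - 2 * σ) + 1 = 2 - 2 * σ := by ring
    rwa [this] at h
  have hNpow : (N : ℝ) ^ (2 - 2 * σ) ≤ T ^ (2 - 2 * σ) :=
    Real.rpow_le_rpow (by positivity) hNT hexp.le
  have hTpow : (0 : ℝ) < T ^ (2 - 2 * σ) := Real.rpow_pos_of_pos hT0 _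
  calc (∑ n ∈ Finset.Icc 2 N, ∑ m ∈ Finset.Ico 1 n,
        if (n : ℝ) / 2 ≤ (m : ℝ) then
          (1 / ((m : ℝ) ^ σ * (n : ℝ) ^ σ)) * ((n : ℝ) / ((n : ℝ) - (m : ℝ)))
        else 0)
      ≤ 2 * (1 + Real.log T) * ∑ n ∈ Finset.Icc 2 N, (n : ℝ) ^ (1 - 2 * σ) := by
        rw [← step2]; exact step1
    _ ≤ 2 * (1 + Real.log T) * ((N : ℝ) ^ (2 - 2 * σ) / (2 - 2 * σ)) := by
        refine mul_le_mul_of_nonneg_left step3 (by positivity)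
    _ ≤ 2 * (3 * Real.log T) * (T ^ (2 - 2 * σ) / (2 - 2 * σ₀)) := by
        gcongr
        linarith
    _ = 3 / (1 - σ₀) * T ^ (2 - 2 * σ) * Real.log T := by
        have hne : (1:ℝ) - σ₀ ≠ 0 := hσ₀'.ne'
        field_simp
end

section
/- Let x₁, …, x_n be elements of a complex Hilbert space H and a₁, …, a_n complex numbers with |a_j| ≤ 1 for all j. Then there exist complex numbers b₁, …, b_n with |b_j| = 1 for all j such that ‖∑_j a_j x_j − ∑_j b_j x_j‖² ≤ 4 ∑_j ‖x_j‖². -/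
open RealInnerProductSpace in
lemma exists_unimodular_pair (a : ℂ) (ha : ‖a‖ ≤ 1) :
    ∃ u : ℂ, ‖u‖ = 1 ∧ ‖2 * a - u‖ = 1 ∧ ‖a - u‖ ≤ 1 := by
  set r : ℝ := ‖a‖ with hr
  have hr0 : 0 ≤ r := norm_nonneg a
  have h1r : 0 ≤ 1 - r ^ 2 := by nlinarith
  set s : ℝ := Real.sqrt (1 - r ^ 2) with hs
  have hs2 : s ^ 2 = 1 - r ^ 2 := Real.sq_sqrt h1r
  have hs0 : 0 ≤ s := Real.sqrt_nonneg _
  set d : ℂ := if a = 0 then 1 else a / ‖a‖ with hd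
  have hdn : ‖d‖ = 1 := by
    by_cases h : a = 0
    · simp [hd, h]
    · simp [hd, h, norm_div, norm_norm, norm_ne_zero_iff.mpr h]
  have had : a = (r : ℂ) * d := by
    by_cases h : a = 0
    · simp [hd, h, hr]
    · have hrne : (r : ℂ) ≠ 0 := by
        exact_mod_cast (norm_ne_zero_iff.mpr h : ‖a‖ ≠ 0)
      rw [hd, if_neg h, ← hr]
      field_simp
  refine ⟨((r : ℂ) + Complex.I * s) * d, ?_, ?_, ?_⟩
  · rw [norm_mul, hdn, mul_one]
    have : ‖((r : ℂ) + Complex.I * s)‖ ^ 2 = 1 := by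
      rw [Complex.sq_norm, Complex.normSq_apply]
      simp
      nlinarith
    nlinarith [norm_nonneg ((r : ℂ) + Complex.I * s)]
  · have : 2 * a - ((r : ℂ) + Complex.I * s) * d = ((r : ℂ) - Complex.I * s) * d := by
      rw [had]; ring
    rw [this, norm_mul, hdn, mul_one]
    have : ‖((r : ℂ) - Complex.I * s)‖ ^ 2 = 1 := by
      rw [Complex.sq_norm, Complex.normSq_apply]
      simp
      nlinarith
    nlinarith [norm_nonneg ((r : ℂ) - Complex.I * s)]
  · have : a - ((r : ℂ) + Complex.I * s) * d = (-(Complex.I * s)) * d := by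
      rw [had]; ring
    rw [this, norm_mul, hdn, mul_one, norm_neg, norm_mul, Complex.norm_I, one_mul,
      Complex.norm_real, Real.norm_of_nonneg hs0]
    have : s ≤ 1 := by nlinarith
    exact this

theorem hilbert_space_unimodular_approx
    {H : Type*} [NormedAddCommGroup H] [InnerProductSpace ℂ H] [CompleteSpace H]
    (n : ℕ) (x : Fin n → H) (a : Fin n → ℂ) (ha : ∀ j, ‖a j‖ ≤ 1) :
    ∃ b : Fin n → ℂ, (∀ j, ‖b j‖ = 1) ∧
      ‖(∑ j, a j • x j) - ∑ j, b j • x j‖ ^ 2 ≤ 4 * ∑ j, ‖x j‖ ^ 2 := by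
  have key : ∀ s : Finset (Fin n), ∃ b : Fin n → ℂ, (∀ j, ‖b j‖ = 1) ∧
      ‖∑ j ∈ s, (a j - b j) • x j‖ ^ 2 ≤ ∑ j ∈ s, ‖x j‖ ^ 2 := by
    intro s
    induction s using Finset.induction_on with
    | empty => exact ⟨fun _ => 1, fun j => by simp, by simp⟩
    | @insert i s hi ih =>
      obtain ⟨b, hb1, hb2⟩ := ih
      obtain ⟨u, hu1, hu2, hu3⟩ := exists_unimodular_pair (a i) (ha i)
      set S : H := ∑ j ∈ s, (a j - b j) • x j with hS
      set c : ℂ := a i - u with hc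
      set v : ℂ := if (RCLike.re (inner ℂ ((c : ℂ) • x i) S : ℂ) : ℝ) ≤ 0 then u else 2 * a i - u with hv
      refine ⟨Function.update b i v, ?_, ?_⟩
      · intro j
        rcases eq_or_ne j i with rfl | h
        · rw [Function.update_self, hv]
          split <;> [exact hu1; exact hu2]
        · rw [Function.update_of_ne h]; exact hb1 j
      · rw [Finset.sum_insert hi, Finset.sum_insert hi, Function.update_self]
        have hsum : ∑ j ∈ s, (a j - Function.update b i v j) • x j = S := by
          apply Finset.sum_congr rfl
          intro j hj
          rw [Function.update_of_ne (ne_of_mem_of_not_mem hj hi)]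
        rw [hsum]
        have hcn : ‖a i - v‖ ≤ 1 := by
          rw [hv]; split
          · exact hu3
          · have : a i - (2 * a i - u) = -(a i - u) := by ring
            rw [this, norm_neg]; exact hu3
        have hre : RCLike.re (inner ℂ (((a i - v) : ℂ) • x i) S : ℂ) ≤ 0 := by
          rw [hv]; split_ifs with h
          · exact h
          · push_neg at h
            have : ((a i - (2 * a i - u)) : ℂ) = -c := by rw [hc]; ring
            rw [this]
            rw [neg_smul, inner_neg_left, map_neg]
            linarith
        have hnorm := @norm_add_sq ℂ H _ _ _ (((a i - v) : ℂ) • x i) S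
        rw [hnorm]
        have h1 : ‖((a i - v) : ℂ) • x i‖ ^ 2 ≤ ‖x i‖ ^ 2 := by
          rw [norm_smul, mul_pow]
          have h1 : ‖((a i - v) : ℂ)‖ ^ 2 ≤ 1 := by
            nlinarith [norm_nonneg ((a i - v) : ℂ)]
          nlinarith [sq_nonneg (‖x i‖)]
        linarith
  obtain ⟨b, hb1, hb2⟩ := key Finset.univ
  refine ⟨b, hb1, ?_⟩
  have : (∑ j, a j • x j) - ∑ j, b j • x j = ∑ j, (a j - b j) • x j := by
    rw [← Finset.sum_sub_distrib]
    apply Finset.sum_congr rfl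
    intro j _
    rw [sub_smul]
  rw [this]
  have h4 : ∑ j, ‖x j‖ ^ 2 ≤ 4 * ∑ j, ‖x j‖ ^ 2 := by
    have : 0 ≤ ∑ j, ‖x j‖ ^ 2 := Finset.sum_nonneg fun j _ => sq_nonneg _
    linarith
  exact le_trans hb2 h4
end
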